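/- Let g ≥ 1 and let a_0, …, a_{2g−1} be complex numbers. Suppose φ ∈ L²(ℝ), φ ≠ 0, has compact (essential) support and satisfies the refinement equation φ(x) = Σ_{k=0}^{2g−1} a_k φ(2x − k) for almost every x ∈ ℝ. Then the essential support of φ is contained in the interval [0, 2g−1]. -/

import Mathlib

open MeasureTheory Complex Real
open scoped ComplexConjugate

noncomputable section

-- affine map x ↦ 2x - k is quasi measure preserving
lemma qmp_affine (k : ℝ) :
    Measure.QuasiMeasurePreserving (fun x : ℝ => 2 * x - k) volume volume := by
  have h1 : Measure.QuasiMeasurePreserving (fun x : ℝ => (2:ℝ) • x) volume volume :=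
    Measure.quasiMeasurePreserving_smul volume (by norm_num)
  have h2 : Measure.QuasiMeasurePreserving (fun x : ℝ => x - k) volume volume :=
    (measurePreserving_sub_right volume k).quasiMeasurePreserving
  simpa [Function.comp_def, smul_eq_mul] using h2.comp h1

lemma step (g : ℕ) (a : ℕ → ℂ) (φ : ℝ → ℂ)
    (href : ∀ᵐ x : ℝ, φ x = ∑ k ∈ Finset.range (2 * g), a k * φ (2 * x - k))
    (A B : ℝ) (h : ∀ᵐ x : ℝ, x ∉ Set.Icc A B → φ x = 0) :
    ∀ᵐ x : ℝ, x ∉ Set.Icc (A / 2) ((B + (2 * g - 1)) / 2) → φ x = 0 := by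
  have hk : ∀ k : ℕ, ∀ᵐ x : ℝ, (2 * x - (k:ℝ)) ∉ Set.Icc A B → φ (2 * x - (k:ℝ)) = 0 :=
    fun k => (qmp_affine (k:ℝ)).ae h
  have hall : ∀ᵐ x : ℝ, ∀ k ∈ Finset.range (2 * g),
      (2 * x - (k:ℝ)) ∉ Set.Icc A B → φ (2 * x - (k:ℝ)) = 0 := by
    exact (MeasureTheory.ae_ball_iff (Finset.range (2*g)).countable_toSet).mpr
      fun k _ => hk k
  filter_upwards [href, hall] with x hx hxa hxo
  rw [hx]
  apply Finset.sum_eq_zero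
  intro k hkmem
  have hk2g : (k:ℝ) ≤ 2 * g - 1 := by
    have := Finset.mem_range.mp hkmem
    have : (k:ℝ) ≤ 2 * (g:ℝ) - 1 := by
      have h' : (k:ℝ) + 1 ≤ 2 * (g:ℝ) := by exact_mod_cast this
      linarith
    exact this
  have : (2 * x - (k:ℝ)) ∉ Set.Icc A B := by
    simp only [Set.mem_Icc, not_and_or, not_le] at hxo ⊢
    rcases hxo with h1 | h1
    · left; nlinarith [Nat.cast_nonneg (α := ℝ) k]
    · right; nlinarith
  rw [hxa k hkmem this, mul_zero]

/-- If `φ ∈ L²(ℝ)`, `φ ≠ 0`, has compact essential support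
and satisfies the refinement equation `φ(x) = ∑_{k=0}^{2g−1} aₖ φ(2x − k)`
a.e., then `φ` vanishes a.e. outside `[0, 2g−1]`, i.e. the essential support of
`φ` is contained in `[0, 2g−1]`. -/
theorem stmt13 (g : ℕ) (hg : 1 ≤ g) (a : ℕ → ℂ) (φ : ℝ → ℂ)
    (hφ : MemLp φ 2 (volume : Measure ℝ))
    (hne : ¬ (φ =ᵐ[volume] (0 : ℝ → ℂ)))
    (hcpt : ∃ R : ℝ, ∀ᵐ x : ℝ, x ∉ Set.Icc (-R) R → φ x = 0)
    (href : ∀ᵐ x : ℝ, φ x = ∑ k ∈ Finset.range (2 * g), a k * φ (2 * x - k)) :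
    ∀ᵐ x : ℝ, x ∉ Set.Icc (0 : ℝ) (2 * g - 1) → φ x = 0 := by
  obtain ⟨R, hR⟩ := hcpt
  set c : ℝ := 2 * g - 1 with hc
  have hc1 : 1 ≤ c := by
    have : (1:ℝ) ≤ (g:ℝ) := by exact_mod_cast hg
    simp only [hc]; linarith
  set S : ℝ := max R (2 * g) with hS
  have hSpos : 0 < S := lt_of_lt_of_le (by positivity) (le_max_right _ _)
  have hScR : c < S := by
    have : (2:ℝ) * g ≤ S := le_max_right _ _
    simp only [hc]; linarith
  -- initial: φ = 0 a.e. outside [-S, S]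
  have h0 : ∀ᵐ x : ℝ, x ∉ Set.Icc (-S) S → φ x = 0 := by
    filter_upwards [hR] with x hx hxo
    apply hx
    intro hmem
    exact hxo ⟨by have := le_max_left R (2*(g:ℝ)); exact le_trans (neg_le_neg this) hmem.1,
      le_trans hmem.2 (le_max_left R (2*(g:ℝ)))⟩
  -- induction
  have hn : ∀ n : ℕ, ∀ᵐ x : ℝ, x ∉ Set.Icc (-(S / 2 ^ n)) (c + (S - c) / 2 ^ n) → φ x = 0 := by
    intro n
    induction n with
    | zero => simpa using h0
    | succ n ih =>
      have := step g a φ href _ _ ih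
      have heq1 : -(S / 2 ^ n) / 2 = -(S / 2 ^ (n+1)) := by ring
      have heq2 : (c + (S - c) / 2 ^ n + (2 * g - 1)) / 2 = c + (S - c) / 2 ^ (n+1) := by
        rw [← hc]; ring
      rwa [heq1, heq2] at this
  filter_upwards [MeasureTheory.ae_all_iff.mpr hn] with x hx hxo
  simp only [Set.mem_Icc, not_and_or, not_le] at hxo
  rcases hxo with h1 | h1
  · -- x < 0 : choose n with S / 2^n < -x
    obtain ⟨n, hn'⟩ := exists_pow_lt_of_lt_one
      (show (0:ℝ) < -x / S from div_pos (by linarith) hSpos) (by norm_num : (1:ℝ)/2 < 1)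
    refine hx n ?_
    intro hmem
    have h2 : (1/2:ℝ)^n * S < -x := (lt_div_iff₀ hSpos).mp hn'
    have he : S / 2 ^ n = (1/2:ℝ)^n * S := by
      rw [div_pow, one_pow]; ring
    have := hmem.1
    rw [he] at this
    linarith
  · -- c < x : choose n with (S-c)/2^n < x - c
    obtain ⟨n, hn'⟩ := exists_pow_lt_of_lt_one
      (show (0:ℝ) < (x - c) / (S - c) by
        apply div_pos <;> linarith) (by norm_num : (1:ℝ)/2 < 1)
    refine hx n ?_
    intro hmem
    have h2 : (1/2:ℝ)^n * (S - c) < x - c := (lt_div_iff₀ (by linarith)).mp hn'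
    have he : (S - c) / 2 ^ n = (1/2:ℝ)^n * (S - c) := by
      rw [div_pow, one_pow]; ring
    have := hmem.2
    rw [he] at this
    linarith
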